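/- Let Z be a separable Banach space, D a countable dense subset of Z \ {0}, and X₀ = ⋂_{ζ∈D} X_ζ where X_ζ = {f ∈ Lip(Z) : ∃ z, |f(ζ+z) − f(z)| > ‖ζ‖/2}. Then X₀ is a Z-invariant dense G_δ subset of Lip(Z) on which the translation action of Z is free: if f ∈ X₀ and ζ·f = f then ζ = 0. -/
import Mathlib


/-- The translation action of `Z` on the space of `1`-Lipschitz functions `Z → ℝ`:
`(ζ · f) z = f (ζ + z)`. -/
def lipTrans {Z : Type*} [NormedAddCommGroup Z] (ζ : Z)
    (f : {f : Z → ℝ // LipschitzWith 1 f}) : {f : Z → ℝ // LipschitzWith 1 f} :=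
  ⟨fun z => f.1 (ζ + z),
    LipschitzWith.of_edist_le fun x y => by
      simpa [edist_add_left] using f.2 (ζ + x) (ζ + y)⟩

/-- Let `Z` be a separable Banach space, `D` a countable dense subset of
`Z \ {0}`, and `X₀ = ⋂_{ζ ∈ D} X_ζ` where
`X_ζ = {f : ∃ z, |f (ζ+z) − f z| > ‖ζ‖/2}`.  Then `X₀` is a `Z`-invariant dense `G_δ`
subset of `Lip(Z)` on which the translation action of `Z` is free. -/
theorem stmt7 {Z : Type*} [NormedAddCommGroup Z] [NormedSpace ℝ Z] [CompleteSpace Z]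
    [TopologicalSpace.SeparableSpace Z]
    (D : Set Z) (hDc : D.Countable) (hD0 : 0 ∉ D)
    (hDdense : {z : Z | z ≠ 0} ⊆ closure D) :
    (∀ ζ : Z, ∀ f ∈ ⋂ ζ' ∈ D, {f : {f : Z → ℝ // LipschitzWith 1 f} |
          ∃ z : Z, |f.1 (ζ' + z) - f.1 z| > ‖ζ'‖ / 2},
        lipTrans ζ f ∈ ⋂ ζ' ∈ D, {f : {f : Z → ℝ // LipschitzWith 1 f} |
          ∃ z : Z, |f.1 (ζ' + z) - f.1 z| > ‖ζ'‖ / 2}) ∧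
    Dense (⋂ ζ' ∈ D, {f : {f : Z → ℝ // LipschitzWith 1 f} |
        ∃ z : Z, |f.1 (ζ' + z) - f.1 z| > ‖ζ'‖ / 2}) ∧
    IsGδ (⋂ ζ' ∈ D, {f : {f : Z → ℝ // LipschitzWith 1 f} |
        ∃ z : Z, |f.1 (ζ' + z) - f.1 z| > ‖ζ'‖ / 2}) ∧
    (∀ f ∈ ⋂ ζ' ∈ D, {f : {f : Z → ℝ // LipschitzWith 1 f} |
          ∃ z : Z, |f.1 (ζ' + z) - f.1 z| > ‖ζ'‖ / 2},
        ∀ ζ : Z, lipTrans ζ f = f → ζ = 0) := by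
  refine ⟨?_, ?_, ?_, ?_⟩
  · -- invariance
    intro ζ f hf
    simp only [Set.mem_iInter, Set.mem_setOf_eq] at hf ⊢
    intro ζ' hζ'
    obtain ⟨z, hz⟩ := hf ζ' hζ'
    refine ⟨z - ζ, ?_⟩
    have h1 : ζ + (ζ' + (z - ζ)) = ζ' + z := by abel
    have h2 : ζ + (z - ζ) = z := by abel
    simpa [lipTrans, h1, h2] using hz
  · -- density
    intro g
    -- approximating sequence
    set F : ℕ → {f : Z → ℝ // LipschitzWith 1 f} := fun n =>
      ⟨fun z => max (min (g.1 z) n) (‖z‖ - n), by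
        have h1 : LipschitzWith 1 fun z : Z => min (g.1 z) (n : ℝ) := g.2.min_const _
        have h2 : LipschitzWith 1 fun z : Z => ‖z‖ - (n : ℝ) := fun x y => by
          simpa [edist_sub_right] using lipschitzWith_one_norm x y
        simpa using h1.max h2⟩ with hF
    have hmem : ∀ n : ℕ, F n ∈ ⋂ ζ' ∈ D, {f : {f : Z → ℝ // LipschitzWith 1 f} |
        ∃ z : Z, |f.1 (ζ' + z) - f.1 z| > ‖ζ'‖ / 2} := by
      intro n
      simp only [Set.mem_iInter, Set.mem_setOf_eq]
      intro ζ' hζ'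
      have hζ0 : ζ' ≠ 0 := fun h => hD0 (h ▸ hζ')
      have hnorm : (0 : ℝ) < ‖ζ'‖ := norm_pos_iff.2 hζ0
      set t : ℝ := (2 * n + 1) / ‖ζ'‖ with ht
      have htpos : 0 < t := by positivity
      refine ⟨t • ζ', ?_⟩
      have hzt : ‖t • ζ'‖ = 2 * n + 1 := by
        rw [norm_smul, Real.norm_eq_abs, abs_of_pos htpos, ht, div_mul_cancel₀]
        exact hnorm.ne'
      have hz2 : ‖ζ' + t • ζ'‖ = ‖ζ'‖ + (2 * n + 1) := by
        have : ζ' + t • ζ' = (1 + t) • ζ' := by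
          rw [add_smul, one_smul]
        rw [this, norm_smul, Real.norm_eq_abs, abs_of_pos (by linarith), add_mul, one_mul,
          ht, div_mul_cancel₀ _ hnorm.ne']
      have e1 : max (min (g.1 (t • ζ')) (n : ℝ)) (‖t • ζ'‖ - n) = ‖t • ζ'‖ - n :=
        max_eq_right (by rw [hzt]; linarith [min_le_right (g.1 (t • ζ')) (n : ℝ)])
      have e2 : max (min (g.1 (ζ' + t • ζ')) (n : ℝ)) (‖ζ' + t • ζ'‖ - n)
          = ‖ζ' + t • ζ'‖ - n :=
        max_eq_right (by rw [hz2]; linarith [min_le_right (g.1 (ζ' + t • ζ')) (n : ℝ)])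
      show ‖ζ'‖ / 2 < |max (min (g.1 (ζ' + t • ζ')) (n : ℝ)) (‖ζ' + t • ζ'‖ - n)
        - max (min (g.1 (t • ζ')) (n : ℝ)) (‖t • ζ'‖ - n)|
      rw [e1, e2, hzt, hz2,
        show ‖ζ'‖ + (2 * (n : ℝ) + 1) - n - (2 * n + 1 - n) = ‖ζ'‖ by ring,
        abs_of_pos hnorm]
      linarith
    have htend : Filter.Tendsto F Filter.atTop (nhds g) := by
      rw [show g = ⟨g.1, g.2⟩ from rfl, tendsto_subtype_rng]
      rw [tendsto_pi_nhds]
      intro z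
      have hev : ∀ᶠ n : ℕ in Filter.atTop, (F n).1 z = g.1 z := by
        filter_upwards [Filter.eventually_ge_atTop (⌈max (g.1 z) (‖z‖ - g.1 z)⌉₊)] with n hn
        have hcast : (⌈max (g.1 z) (‖z‖ - g.1 z)⌉₊ : ℝ) ≤ n := Nat.cast_le.2 hn
        have hceil := Nat.le_ceil (max (g.1 z) (‖z‖ - g.1 z))
        have h1 : g.1 z ≤ (n : ℝ) :=
          le_trans (le_max_left _ _) (hceil.trans hcast)
        have h2 : ‖z‖ - (n : ℝ) ≤ g.1 z := by
          have := le_trans (le_max_right (g.1 z) (‖z‖ - g.1 z)) (hceil.trans hcast)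
          linarith
        show max (min (g.1 z) (n : ℝ)) (‖z‖ - n) = g.1 z
        rw [min_eq_left h1, max_eq_left h2]
      exact Filter.Tendsto.congr' (hev.mono fun n h => h.symm) tendsto_const_nhds
    exact mem_closure_of_tendsto htend (Filter.Eventually.of_forall hmem)
  · -- Gδ
    refine IsGδ.biInter hDc fun ζ' _ => IsOpen.isGδ ?_
    have : {f : {f : Z → ℝ // LipschitzWith 1 f} | ∃ z : Z, |f.1 (ζ' + z) - f.1 z| > ‖ζ'‖ / 2}
        = ⋃ z : Z, {f : {f : Z → ℝ // LipschitzWith 1 f} | ‖ζ'‖ / 2 < |f.1 (ζ' + z) - f.1 z|} := by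
      ext f; simp [gt_iff_lt]
    rw [this]
    refine isOpen_iUnion fun z => isOpen_lt continuous_const ?_
    exact (((continuous_apply (ζ' + z)).comp continuous_subtype_val).sub
      ((continuous_apply z).comp continuous_subtype_val)).abs
  · -- freeness
    intro f hf ζ hζ
    by_contra h0
    simp only [Set.mem_iInter, Set.mem_setOf_eq] at hf
    have hζc : ζ ∈ closure D := hDdense h0
    have hζn : (0 : ℝ) < ‖ζ‖ := norm_pos_iff.2 h0
    obtain ⟨ζ', hζ'D, hd⟩ := Metric.mem_closure_iff.1 hζc (‖ζ‖ / 3) (by linarith)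
    obtain ⟨z, hz⟩ := hf ζ' hζ'D
    have hper : ∀ w : Z, f.1 (ζ + w) = f.1 w := fun w =>
      congrFun (congrArg Subtype.val hζ) w
    have heq : f.1 z = f.1 (ζ + z) := (hper z).symm
    have hlip : |f.1 (ζ' + z) - f.1 (ζ + z)| ≤ ‖ζ' - ζ‖ := by
      have := f.2.dist_le_mul (ζ' + z) (ζ + z)
      simpa [Real.dist_eq, dist_eq_norm, add_sub_add_right_eq_sub] using this
    have hdz : ‖ζ' - ζ‖ < ‖ζ‖ / 3 := by
      have := hd; rwa [dist_comm, dist_eq_norm] at this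
    have hζ'big : ‖ζ‖ - ‖ζ‖ / 3 ≤ ‖ζ'‖ := by
      linarith [norm_sub_norm_le ζ ζ', hdz, norm_sub_rev ζ ζ']
    rw [heq] at hz
    have hkey : ‖ζ'‖ / 2 < ‖ζ‖ / 3 := lt_of_lt_of_le hz (hlip.trans hdz.le)
    linarith [hζ'big]
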